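/- Let G = (B,ψ,A) be a quantum graph with δ-form ψ and completely positive A, and E_G = B·ε_G·B the quantum edge correspondence. Then {x ∈ B : x·ξ = 0 for all ξ ∈ E_G} equals the orthogonal complement (with respect to the ψ-inner product) of the subspace B A*(B) B, where A* is the adjoint of A with respect to the ψ-inner product. -/

import Mathlib

open scoped TensorProduct
open TensorProduct

noncomputable section


open scoped TensorProduct
open TensorProduct

noncomputable section

variable {B : Type*} [Ring B] [StarRing B] [Algebra ℂ B] [StarModule ℂ B]
  [Module.Finite ℂ B] [Module.Free ℂ B]

/-- The multiplication map `m : B ⊗ B → B`. -/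
abbrev mulMap (B : Type*) [Ring B] [Algebra ℂ B] : B ⊗[ℂ] B →ₗ[ℂ] B := LinearMap.mul' ℂ B

/-- `ψ ⊗ ψ` as a functional on `B ⊗ B`. -/
def psi2 (ψ : B →ₗ[ℂ] ℂ) : B ⊗[ℂ] B →ₗ[ℂ] ℂ :=
  (TensorProduct.lid ℂ ℂ).toLinearMap ∘ₗ TensorProduct.map ψ ψ

/-- `ψ ⊗ id : B ⊗ B → B`. -/
def psiOne (ψ : B →ₗ[ℂ] ℂ) : B ⊗[ℂ] B →ₗ[ℂ] B :=
  (TensorProduct.lid ℂ B).toLinearMap ∘ₗ TensorProduct.map ψ LinearMap.id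

/-- `ψ` is a faithful state. -/
def IsState (ψ : B →ₗ[ℂ] ℂ) : Prop :=
  ψ 1 = 1 ∧ (∀ x : B, 0 ≤ (ψ (star x * x)).re ∧ (ψ (star x * x)).im = 0) ∧
    ∀ x : B, ψ (star x * x) = 0 → x = 0

/-- `mstar` is the adjoint of multiplication w.r.t. the GNS inner products of `ψ`:
`⟪y ⊗ z, m*(x)⟫_{ψ⊗ψ} = ⟪y * z, x⟫_ψ`. -/
def IsAdjointMul (ψ : B →ₗ[ℂ] ℂ) (mstar : B →ₗ[ℂ] B ⊗[ℂ] B) : Prop :=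
  ∀ x y z : B, psi2 ψ ((star y ⊗ₜ[ℂ] star z) * mstar x) = ψ (star (y * z) * x)

/-- `ψ` is a `δ`-form: `m m* = δ² id`. -/
def IsDeltaForm (mstar : B →ₗ[ℂ] B ⊗[ℂ] B) (δ : ℝ) : Prop :=
  ∀ x : B, mulMap B (mstar x) = ((δ : ℂ)^2) • x

/-- `A` is a quantum adjacency matrix: `m (A ⊗ A) m* = δ² A`. -/
def IsQAdj (mstar : B →ₗ[ℂ] B ⊗[ℂ] B) (δ : ℝ) (A : B →ₗ[ℂ] B) : Prop :=
  ∀ x : B, mulMap B (TensorProduct.map A A (mstar x)) = ((δ : ℂ)^2) • A x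

/-- The quantum edge indicator `ε = (1/δ²)(1 ⊗ A) m*(1)`. -/
def edgeInd (mstar : B →ₗ[ℂ] B ⊗[ℂ] B) (δ : ℝ) (A : B →ₗ[ℂ] B) : B ⊗[ℂ] B :=
  (((δ : ℂ)^2)⁻¹) • (LinearMap.lTensor B A) (mstar 1)

/-- The `#`-multiplication on `B ⊗ B`: `(a⊗b)#(c⊗d) = (ac)⊗(db)` (i.e. `B ⊗ Bᵒᵖ`). -/
def hashMul (ξ η : B ⊗[ℂ] B) : B ⊗[ℂ] B :=
  (TensorProduct.congr (LinearEquiv.refl ℂ B) (MulOpposite.opLinearEquiv ℂ (M := B))).symm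
    ((TensorProduct.congr (LinearEquiv.refl ℂ B) (MulOpposite.opLinearEquiv ℂ (M := B))) ξ *
      (TensorProduct.congr (LinearEquiv.refl ℂ B) (MulOpposite.opLinearEquiv ℂ (M := B))) η)

/-- The (conjugate-linear) star operation on `B ⊗ B`, `star (a ⊗ b) = star a ⊗ star b`,
defined via a choice of basis. -/
def starT (ξ : B ⊗[ℂ] B) : B ⊗[ℂ] B :=
  ∑ p : Module.Free.ChooseBasisIndex ℂ B × Module.Free.ChooseBasisIndex ℂ B,
    (starRingEnd ℂ)
      (((Module.Free.chooseBasis ℂ B).tensorProduct (Module.Free.chooseBasis ℂ B)).repr ξ p) •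
      (star ((Module.Free.chooseBasis ℂ B) p.1) ⊗ₜ[ℂ] star ((Module.Free.chooseBasis ℂ B) p.2))

/-- The `B`-valued inner product on `B ⊗ B`: `⟨a⊗b, c⊗d⟩_B = ψ(a*c) b* d`. -/
def bip (ψ : B →ₗ[ℂ] ℂ) (ξ η : B ⊗[ℂ] B) : B := psiOne ψ (starT ξ * η)

/-- Positivity in a star ring. -/
def IsPosEl {R : Type*} [Ring R] [StarRing R] (x : R) : Prop := ∃ y, x = star y * y

/-- Complete positivity of a linear map on `B`. -/
def IsCP (A : B →ₗ[ℂ] B) : Prop :=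
  ∀ (n : ℕ) (M : Matrix (Fin n) (Fin n) B), IsPosEl M → IsPosEl (M.map A)

/-- The map `A_ξ : x ↦ δ² (ψ ⊗ 1)(x · ξ)`. -/
def Axi (ψ : B →ₗ[ℂ] ℂ) (δ : ℝ) (ξ : B ⊗[ℂ] B) : B →ₗ[ℂ] B :=
  ((δ : ℂ)^2) • ((psiOne ψ) ∘ₗ ((LinearMap.mul ℂ (B ⊗[ℂ] B)).flip ξ) ∘ₗ
    (Algebra.TensorProduct.includeLeft : B →ₐ[ℂ] B ⊗[ℂ] B).toLinearMap)

/-- The quantum edge correspondence `E_G = B · ε_G · B` as a subspace of `B ⊗ B`. -/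
def EGspan (mstar : B →ₗ[ℂ] B ⊗[ℂ] B) (δ : ℝ) (A : B →ₗ[ℂ] B) : Submodule ℂ (B ⊗[ℂ] B) :=
  Submodule.span ℂ
    {z : B ⊗[ℂ] B | ∃ x y : B, z = (x ⊗ₜ[ℂ] (1 : B)) * edgeInd mstar δ A * ((1 : B) ⊗ₜ[ℂ] y)}

section AuxLemmas

set_option linter.unusedSectionVars false

lemma psi2_tmul' (ψ : B →ₗ[ℂ] ℂ) (x y : B) : psi2 ψ (x ⊗ₜ[ℂ] y) = ψ x * ψ y := by
  simp [psi2]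

/-- The GNS form of a positive functional is hermitian. -/
lemma herm_aux (ψ : B →ₗ[ℂ] ℂ) (him : ∀ z : B, (ψ (star z * z)).im = 0) (u v : B) :
    ψ (star u * v) = (starRingEnd ℂ) (ψ (star v * u)) := by
  have h1 : (ψ (star u * v) + ψ (star v * u)).im = 0 := by
    have := him (u + v)
    have e : star (u + v) * (u + v)
        = star u * u + star v * v + (star u * v + star v * u) := by
      rw [star_add, add_mul, mul_add, mul_add]; abel
    rw [e] at this
    simp only [map_add, Complex.add_im, him u, him v] at this
    simpa using this
  have h2 : (Complex.I * (ψ (star u * v) - ψ (star v * u))).im = 0 := by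
    have := him (u + Complex.I • v)
    have e : star (u + Complex.I • v) * (u + Complex.I • v)
        = star u * u + star v * v
          + (Complex.I • (star u * v) + (-Complex.I) • (star v * u)) := by
      rw [star_add, star_smul]
      simp only [RCLike.star_def, Complex.conj_I, neg_smul, add_mul, mul_add, neg_mul,
        smul_mul_assoc, mul_smul_comm, smul_add, smul_smul, Complex.I_mul_I, neg_neg,
        neg_smul, one_smul, neg_one_smul, mul_neg, mul_one, one_mul]
      match_scalars <;> simp [pow_two, Complex.I_mul_I]
    rw [e] at this
    simp only [map_add, map_smul, Complex.add_im, him u, him v, smul_eq_mul, neg_mul,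
      Complex.neg_im] at this
    have : (Complex.I * ψ (star u * v)).im - (Complex.I * ψ (star v * u)).im = 0 := by
      linarith
    rw [mul_sub]
    simpa [Complex.sub_im] using this
  apply Complex.ext
  · have := h2
    simp only [Complex.mul_im, Complex.I_re, Complex.I_im, Complex.sub_re, Complex.sub_im] at this
    simp only [Complex.conj_re]
    linarith
  · have := h1
    simp only [Complex.add_im] at this
    simp only [Complex.conj_im]
    linarith

/-- Faithfulness gives nondegeneracy of the GNS form. -/
lemma nondeg_aux (ψ : B →ₗ[ℂ] ℂ) (hf : ∀ x : B, ψ (star x * x) = 0 → x = 0)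
    (w : B) (h : ∀ a : B, ψ (star a * w) = 0) : w = 0 := hf w (h w)

/-- Separation: the functionals `z ↦ psi2 ψ ((c ⊗ d) * z)` jointly separate points. -/
lemma sep_aux (ψ : B →ₗ[ℂ] ℂ) (hf : ∀ x : B, ψ (star x * x) = 0 → x = 0)
    (z : B ⊗[ℂ] B) (h : ∀ c d : B, psi2 ψ ((c ⊗ₜ[ℂ] d) * z) = 0) : z = 0 := by
  haveI : FiniteDimensional ℂ B := inferInstance
  set N : B →ₗ[ℂ] Module.Dual ℂ B :=
    (LinearMap.llcomp ℂ B B ℂ ψ) ∘ₗ (LinearMap.mul ℂ B) with hN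
  have hNapp : ∀ d x : B, N d x = ψ (d * x) := fun d x => rfl
  have hinj : Function.Injective N := by
    rw [← LinearMap.ker_eq_bot, LinearMap.ker_eq_bot']
    intro d hd
    have : ψ (d * star d) = 0 := by
      have := congrArg (fun f => f (star d)) hd
      simpa [hNapp] using this
    have : star d = 0 := hf (star d) (by simpa using this)
    simpa using congrArg star this
  have hsurj : Function.Surjective N :=
    (LinearMap.injective_iff_surjective_of_finrank_eq_finrank
      (Subspace.dual_finrank_eq).symm).mp hinj
  have key : ∀ f g : Module.Dual ℂ B,
      TensorProduct.lid ℂ ℂ (TensorProduct.map f g z) = 0 := by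
    intro f g
    obtain ⟨c, rfl⟩ := hsurj f
    obtain ⟨d, rfl⟩ := hsurj g
    have heq : ∀ w : B ⊗[ℂ] B,
        TensorProduct.lid ℂ ℂ (TensorProduct.map (N c) (N d) w)
          = psi2 ψ ((c ⊗ₜ[ℂ] d) * w) := by
      intro w
      induction w using TensorProduct.induction_on with
      | zero => simp
      | tmul x y => simp [hNapp, psi2_tmul', Algebra.TensorProduct.tmul_mul_tmul]
      | add w1 w2 h1 h2 => simp [mul_add, h1, h2]
    rw [heq]
    exact h c d
  set b := Module.Free.chooseBasis ℂ B with hb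
  have hcoord : ∀ (w : B ⊗[ℂ] B) (p : _ × _), (b.tensorProduct b).repr w p
      = TensorProduct.lid ℂ ℂ (TensorProduct.map (b.coord p.1) (b.coord p.2) w) := by
    intro w p
    induction w using TensorProduct.induction_on with
    | zero => simp
    | tmul x y =>
        obtain ⟨i, j⟩ := p
        simp [Module.Basis.tensorProduct_repr_tmul_apply, Module.Basis.coord_apply, mul_comm]
    | add w1 w2 h1 h2 => simp [h1, h2]
  have hrepr : ∀ p, (b.tensorProduct b).repr z p = 0 := by
    intro p
    rw [hcoord]
    exact key _ _
  have : (b.tensorProduct b).repr z = 0 := Finsupp.ext hrepr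
  simpa using ((b.tensorProduct b).repr.map_eq_zero_iff).mp this

/-- Separation, star form. -/
lemma ssep_aux (ψ : B →ₗ[ℂ] ℂ) (hf : ∀ x : B, ψ (star x * x) = 0 → x = 0)
    (z : B ⊗[ℂ] B) (h : ∀ c d : B, psi2 ψ ((star c ⊗ₜ[ℂ] star d) * z) = 0) : z = 0 := by
  apply sep_aux ψ hf
  intro c d
  have := h (star c) (star d)
  rwa [star_star, star_star] at this

/-- Left multiplication in the first leg commutes with `1 ⊗ A`. -/
lemma lmul_lTensor (A : B →ₗ[ℂ] B) (y : B) (w : B ⊗[ℂ] B) :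
    (y ⊗ₜ[ℂ] (1 : B)) * LinearMap.lTensor B A w
      = LinearMap.lTensor B A ((y ⊗ₜ[ℂ] (1 : B)) * w) := by
  induction w using TensorProduct.induction_on with
  | zero => simp
  | tmul u v => simp [Algebra.TensorProduct.tmul_mul_tmul]
  | add w1 w2 h1 h2 => simp [mul_add, h1, h2]

/-- `m*` is a left `B`-module map: `(y ⊗ 1) m*(1) = m*(y)`. -/
lemma bimod_aux (ψ : B →ₗ[ℂ] ℂ) (hf : ∀ x : B, ψ (star x * x) = 0 → x = 0)
    (mstar : B →ₗ[ℂ] B ⊗[ℂ] B) (hadj : IsAdjointMul ψ mstar) (y : B) :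
    (y ⊗ₜ[ℂ] (1 : B)) * mstar 1 = mstar y := by
  rw [← sub_eq_zero]
  apply ssep_aux ψ hf
  intro c d
  rw [mul_sub, map_sub]
  have e1 : (star c ⊗ₜ[ℂ] star d) * ((y ⊗ₜ[ℂ] (1 : B)) * mstar 1)
      = (star (star y * c) ⊗ₜ[ℂ] star d) * mstar 1 := by
    rw [← mul_assoc]
    congr 1
    rw [Algebra.TensorProduct.tmul_mul_tmul]
    congr 1
    · rw [star_mul, star_star]
    · rw [mul_one]
  rw [e1, hadj 1 (star y * c) d, hadj y c d]
  have : star (star y * c * d) * 1 = star (c * d) * y := by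
    simp only [star_mul, star_star, mul_one, mul_assoc]
  rw [this, sub_self]

/-- Pairing against `1 ⊗ A` moves `A` to `Astar` in the second slot. -/
lemma lpair_aux (ψ : B →ₗ[ℂ] ℂ) (him : ∀ z : B, (ψ (star z * z)).im = 0)
    (A Astar : B →ₗ[ℂ] B)
    (hAstar : ∀ x y : B, ψ (star (A x) * y) = ψ (star x * Astar y))
    (c d : B) (w : B ⊗[ℂ] B) :
    psi2 ψ ((star c ⊗ₜ[ℂ] star d) * LinearMap.lTensor B A w)
      = psi2 ψ ((star c ⊗ₜ[ℂ] star (Astar d)) * w) := by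
  induction w using TensorProduct.induction_on with
  | zero => simp
  | tmul x y =>
      simp only [LinearMap.lTensor_tmul, Algebra.TensorProduct.tmul_mul_tmul, psi2_tmul']
      congr 1
      calc ψ (star d * A y) = (starRingEnd ℂ) (ψ (star (A y) * d)) := herm_aux ψ him d (A y)
        _ = (starRingEnd ℂ) (ψ (star y * Astar d)) := by rw [hAstar]
        _ = ψ (star (Astar d) * y) := (herm_aux ψ him (Astar d) y).symm
  | add w1 w2 h1 h2 => simp [mul_add, h1, h2]

end AuxLemmas

/-- `{x : x·ξ = 0 for all ξ ∈ E_G}` is the orthogonal complement of `B A*(B) B`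
with respect to the ψ-inner product. -/
theorem stmt_13 {B : Type*} [Ring B] [StarRing B] [Algebra ℂ B] [StarModule ℂ B]
    [Module.Finite ℂ B] [Module.Free ℂ B]
    (ψ : B →ₗ[ℂ] ℂ) (hψ : IsState ψ)
    (mstar : B →ₗ[ℂ] B ⊗[ℂ] B) (hadj : IsAdjointMul ψ mstar)
    (δ : ℝ) (hδ : 0 < δ) (hdelta : IsDeltaForm mstar δ)
    (A : B →ₗ[ℂ] B) (hA : IsQAdj mstar δ A) (hcp : IsCP A)
    (Astar : B →ₗ[ℂ] B)
    (hAstar : ∀ x y : B, ψ (star (A x) * y) = ψ (star x * Astar y)) :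
    ∀ x : B,
      (∀ a b : B,
        (x ⊗ₜ[ℂ] (1 : B)) * ((a ⊗ₜ[ℂ] (1 : B)) * edgeInd mstar δ A * ((1 : B) ⊗ₜ[ℂ] b)) = 0) ↔
      (∀ a b c : B, ψ (star (a * Astar b * c) * x) = 0) := by
  obtain ⟨hst, hpos, hf⟩ := hψ
  have him : ∀ z : B, (ψ (star z * z)).im = 0 := fun z => (hpos z).2
  have herm := herm_aux ψ him
  have hδ' : (δ : ℂ) ≠ 0 := Complex.ofReal_ne_zero.mpr (ne_of_gt hδ)
  have hs : ((δ : ℂ)^2)⁻¹ ≠ 0 := inv_ne_zero (pow_ne_zero 2 hδ')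
  -- the main structural identity
  have hmain : ∀ y : B, (y ⊗ₜ[ℂ] (1 : B)) * edgeInd mstar δ A
      = (((δ : ℂ)^2)⁻¹) • LinearMap.lTensor B A (mstar y) := by
    intro y
    rw [edgeInd, mul_smul_comm, lmul_lTensor, bimod_aux ψ hf mstar hadj]
  -- the pairing identity for `lTensor A (mstar y)`
  have hpair : ∀ y c d : B,
      psi2 ψ ((star c ⊗ₜ[ℂ] star d) * LinearMap.lTensor B A (mstar y))
        = ψ (star (c * Astar d) * y) := by
    intro y c d
    rw [lpair_aux ψ him A Astar hAstar, hadj y c (Astar d)]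
  intro x
  constructor
  · intro H a b c
    -- step 1: `lTensor A (mstar (x*a)) = 0` for all `a`
    have key1 : ∀ a : B, LinearMap.lTensor B A (mstar (x * a)) = 0 := by
      intro a
      have h0 := H a 1
      rw [Algebra.TensorProduct.one_def.symm, mul_one, ← mul_assoc,
        Algebra.TensorProduct.tmul_mul_tmul, mul_one, hmain (x * a)] at h0
      exact (smul_eq_zero.mp h0).resolve_left hs
    -- step 2: scalar orthogonality
    have key2 : ∀ a c d : B, ψ (star (c * Astar d) * (x * a)) = 0 := by
      intro a c d
      rw [← hpair (x * a) c d, key1 a]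
      simp
    -- step 3: `star x * c * Astar d = 0`
    have key3 : ∀ c d : B, star x * c * Astar d = 0 := by
      intro c d
      apply nondeg_aux ψ hf
      intro a
      have := key2 a c d
      rw [herm (c * Astar d) (x * a)] at this
      have h2 : ψ (star (x * a) * (c * Astar d)) = 0 := by
        have := congrArg (starRingEnd ℂ) this
        simpa using this
      calc ψ (star a * (star x * c * Astar d))
          = ψ (star (x * a) * (c * Astar d)) := by
            congr 1
            simp only [star_mul, mul_assoc]
        _ = 0 := h2
    -- conclude
    have key4 : star (Astar b) * (star a * x) = 0 := by
      have := key3 a b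
      have := congrArg star this
      simpa [star_mul, star_star, mul_assoc] using this
    have : star (a * Astar b * c) * x = star c * (star (Astar b) * (star a * x)) := by
      simp only [star_mul, mul_assoc]
    rw [this, key4, mul_zero, map_zero]
  · intro H a b
    -- step 1: `star x * a * Astar b = 0`
    have key3 : ∀ a b : B, star x * a * Astar b = 0 := by
      intro a b
      have h0 : star (Astar b) * (star a * x) = 0 := by
        apply nondeg_aux ψ hf
        intro c
        have := H a b c
        rw [show star (a * Astar b * c) * x
            = star c * (star (Astar b) * (star a * x)) by simp only [star_mul, mul_assoc]] at this
        exact this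
      have := congrArg star h0
      simpa [star_mul, star_star, mul_assoc] using this
    -- step 2: `lTensor A (mstar (x*a)) = 0`
    have key1 : LinearMap.lTensor B A (mstar (x * a)) = 0 := by
      apply ssep_aux ψ hf
      intro c d
      rw [hpair (x * a) c d]
      have h2 : star (x * a) * (c * Astar d) = 0 := by
        have := key3 c d
        calc star (x * a) * (c * Astar d) = star a * (star x * c * Astar d) := by
              simp only [star_mul, mul_assoc]
          _ = 0 := by rw [this, mul_zero]
      rw [herm (c * Astar d) (x * a), h2, map_zero, map_zero]
    rw [← mul_assoc, ← mul_assoc, Algebra.TensorProduct.tmul_mul_tmul, mul_one, hmain (x * a),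
      key1, smul_zero, zero_mul]

end
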